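/- If finite graphs G and H are CR-similar, then for every connected component G' of G there is a connected component H' of H with G' CR-similar to H', and vice versa. -/

import Mathlib

attribute [local instance] Classical.propDecidable

/-- The type of colors at round `r` of color refinement. -/
def CType : ℕ → Type
  | 0 => Unit
  | r + 1 => Multiset (CType r)

/-- The color of vertex `x` after `r` rounds of color refinement on `G`. -/
noncomputable def crColor {V : Type*} [Fintype V] (G : SimpleGraph V) :
    (r : ℕ) → V → CType r
  | 0, _ => ()
  | r + 1, x => ((G.neighborSet x).toFinite.toFinset).val.map (crColor G r)

/-- The full color-refinement color sequence of a vertex. -/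
noncomputable def crSeq {V : Type*} [Fintype V] (G : SimpleGraph V) (x : V) :
    (r : ℕ) → CType r :=
  fun r => crColor G r x

/-- The set of full color sequences arising at vertices of `G`. -/
noncomputable def crSet {V : Type*} [Fintype V] (G : SimpleGraph V) :
    Set ((r : ℕ) → CType r) :=
  Set.range (crSeq G)

open SimpleGraph

lemma crColor_succ {V : Type*} [Fintype V] (G : SimpleGraph V) (r : ℕ) (x : V) :
    crColor G (r + 1) x = ((G.neighborSet x).toFinite.toFinset).val.map (crColor G r) := by
  rfl

/-- Forgetting projection between color levels. -/
def ctProj : (r : ℕ) → CType (r + 1) → CType r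
  | 0, _ => ()
  | r + 1, m => (m : Multiset (CType (r+1))).map (ctProj r)

lemma ctProj_crColor {V : Type*} [Fintype V] (G : SimpleGraph V) :
    ∀ (r : ℕ) (x : V), ctProj r (crColor G (r + 1) x) = crColor G r x := by
  intro r
  induction r with
  | zero => intro x; rfl
  | succ r ih =>
    intro x
    rw [crColor_succ, crColor_succ]
    show Multiset.map (ctProj r) (Multiset.map (crColor G (r+1)) _) = _
    rw [Multiset.map_map]
    exact Multiset.map_congr rfl (fun y _ => ih y)

lemma crColor_down {VA VB : Type*} [Fintype VA] [Fintype VB]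
    (A : SimpleGraph VA) (B : SimpleGraph VB) {z : VA} {w : VB} :
    ∀ (r k : ℕ), crColor A (r + k) z = crColor B (r + k) w →
      crColor A r z = crColor B r w := by
  intro r k
  induction k with
  | zero => exact id
  | succ k ih =>
    intro hk
    apply ih
    have h2 : crColor A ((r + k) + 1) z = crColor B ((r + k) + 1) w := hk
    have := congrArg (ctProj (r + k)) h2
    rwa [ctProj_crColor, ctProj_crColor] at this

/-- Key step: matching full color sequences transfer along edges. -/
lemma rel_step {VA VB : Type*} [Fintype VA] [Fintype VB]
    (A : SimpleGraph VA) (B : SimpleGraph VB) {x z : VA} {u : VB}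
    (hrel : ∀ r, crColor A r x = crColor B r u) (hz : A.Adj x z) :
    ∃ w, B.Adj u w ∧ ∀ r, crColor A r z = crColor B r w := by
  have hsel : ∀ r : ℕ, ∃ w : {w : VB // w ∈ (B.neighborSet u).toFinite.toFinset},
      crColor A r z = crColor B r w.1 := by
    intro r
    have h1 := hrel (r + 1)
    rw [crColor_succ, crColor_succ] at h1
    have hmem : crColor A r z ∈
        ((A.neighborSet x).toFinite.toFinset).val.map (crColor A r) := by
      apply Multiset.mem_map_of_mem
      rw [Finset.mem_val, Set.Finite.mem_toFinset]
      exact hz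
    rw [h1] at hmem
    obtain ⟨w, hw, hcw⟩ := Multiset.mem_map.mp hmem
    exact ⟨⟨w, Finset.mem_val.mp hw⟩, hcw.symm⟩
  choose g hg using hsel
  obtain ⟨w, hwinf⟩ := Finite.exists_infinite_fiber g
  rw [Set.infinite_coe_iff] at hwinf
  refine ⟨w.1, ?_, ?_⟩
  · have := w.2
    rwa [Set.Finite.mem_toFinset] at this
  · intro r
    obtain ⟨r', hr'mem, hrr'⟩ := hwinf.exists_gt r
    have hr'eq : g r' = w := hr'mem
    have := hg r'
    rw [hr'eq] at this
    obtain ⟨k, rfl⟩ : ∃ k, r' = r + k := ⟨r' - r, by omega⟩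
    exact crColor_down A B r k this

lemma rel_walk {VA VB : Type*} [Fintype VA] [Fintype VB]
    (A : SimpleGraph VA) (B : SimpleGraph VB) {x z : VA} (p : A.Walk x z) :
    ∀ {u : VB}, (∀ r, crColor A r x = crColor B r u) →
      ∃ w, B.Reachable u w ∧ ∀ r, crColor A r z = crColor B r w := by
  induction p with
  | nil => exact fun h => ⟨_, Reachable.refl _, h⟩
  | cons hadj _ ih =>
    intro u h
    obtain ⟨w, hw, hrel⟩ := rel_step A B h hadj
    obtain ⟨w', hw', hrel'⟩ := ih hrel
    exact ⟨w', hw.reachable.trans hw', hrel'⟩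

lemma crColor_induce {V : Type*} [Fintype V] (G : SimpleGraph V) (s : Set V)
    (hs : ∀ ⦃a b : V⦄, a ∈ s → G.Adj a b → b ∈ s) :
    ∀ (r : ℕ) (v : s), crColor (G.induce s) r v = crColor G r v.1 := by
  intro r
  induction r with
  | zero => intro v; rfl
  | succ r ih =>
    intro v
    rw [crColor_succ, crColor_succ]
    have hval : (((G.induce s).neighborSet v).toFinite.toFinset).val.map
        (Subtype.val) = ((G.neighborSet v.1).toFinite.toFinset).val := by
      refine (Multiset.Nodup.ext ?_ ?_).mpr ?_
      · exact Multiset.Nodup.map Subtype.val_injective (Finset.nodup _)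
      · exact Finset.nodup _
      · intro a
        simp only [Multiset.mem_map, Finset.mem_val, Set.Finite.mem_toFinset,
          mem_neighborSet]
        constructor
        · rintro ⟨b, hb, rfl⟩
          simpa using hb
        · intro ha
          exact ⟨⟨a, hs v.2 ha⟩, by simpa using ha, rfl⟩
    calc (((G.induce s).neighborSet v).toFinite.toFinset).val.map
          (crColor (G.induce s) r)
        = (((G.induce s).neighborSet v).toFinite.toFinset).val.map
          (fun w => crColor G r w.1) := Multiset.map_congr rfl (fun y _ => ih y)
      _ = ((((G.induce s).neighborSet v).toFinite.toFinset).val.map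
          Subtype.val).map (crColor G r) := by rw [Multiset.map_map]; rfl
      _ = ((G.neighborSet v.1).toFinite.toFinset).val.map (crColor G r) := by
          rw [hval]

lemma crColor_instIrrel {V : Type*} {i1 i2 : Fintype V} (G : SimpleGraph V)
    (r : ℕ) (x : V) : @crColor V i1 G r x = @crColor V i2 G r x := by
  cases Subsingleton.elim i1 i2; rfl

lemma supp_closed {V : Type*} (G : SimpleGraph V) (c : G.ConnectedComponent) :
    ∀ ⦃a b : V⦄, a ∈ c.supp → G.Adj a b → b ∈ c.supp := by
  intro a b ha hab
  rw [ConnectedComponent.mem_supp_iff] at ha ⊢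
  rw [← ha]
  exact (ConnectedComponent.eq.mpr hab.reachable).symm

lemma crSet_induce {V : Type*} [Fintype V] (G : SimpleGraph V)
    (c : G.ConnectedComponent) :
    crSet (G.induce c.supp) = crSeq G '' c.supp := by
  ext f
  constructor
  · rintro ⟨v, rfl⟩
    refine ⟨v.1, v.2, funext fun r => ?_⟩
    exact ((crColor_induce G c.supp (supp_closed G c) r v).symm.trans
      (crColor_instIrrel _ r v))
  · rintro ⟨y, hy, rfl⟩
    refine ⟨⟨y, hy⟩, funext fun r => ?_⟩
    exact (crColor_instIrrel (G.induce c.supp) r (⟨y, hy⟩ : c.supp)).trans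
      (crColor_induce G c.supp (supp_closed G c) r ⟨y, hy⟩)

lemma image_supp_subset {VA VB : Type*} [Fintype VA] [Fintype VB]
    (A : SimpleGraph VA) (B : SimpleGraph VB) {x : VA} {u : VB}
    (hrel : ∀ r, crColor A r x = crColor B r u) :
    crSeq A '' (A.connectedComponentMk x).supp ⊆
      crSeq B '' (B.connectedComponentMk u).supp := by
  rintro _ ⟨y, hy, rfl⟩
  rw [ConnectedComponent.mem_supp_iff] at hy
  obtain ⟨p⟩ := (ConnectedComponent.eq.mp hy).symm
  obtain ⟨w, hw, hrel'⟩ := rel_walk A B p hrel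
  refine ⟨w, ?_, funext fun r => (hrel' r).symm⟩
  rw [ConnectedComponent.mem_supp_iff]
  exact (ConnectedComponent.eq.mpr hw).symm

/-- If `G` and `H` are CR-similar, then every connected component of `G` is
CR-similar to some connected component of `H`, and vice versa. -/
theorem stmt_9 {VG VH : Type*} [Fintype VG] [Fintype VH]
    (G : SimpleGraph VG) (H : SimpleGraph VH)
    (h : crSet G = crSet H) :
    (∀ c : G.ConnectedComponent, ∃ d : H.ConnectedComponent,
      crSet (G.induce c.supp) = crSet (H.induce d.supp)) ∧
    (∀ d : H.ConnectedComponent, ∃ c : G.ConnectedComponent,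
      crSet (G.induce c.supp) = crSet (H.induce d.supp)) := by
  have hGH : ∀ x : VG, ∃ u : VH, ∀ r, crColor G r x = crColor H r u := by
    intro x
    have hx : crSeq G x ∈ crSet H := by rw [← h]; exact ⟨x, rfl⟩
    obtain ⟨u, hu⟩ := hx
    exact ⟨u, fun r => (congrFun hu r).symm⟩
  have hHG : ∀ u : VH, ∃ x : VG, ∀ r, crColor H r u = crColor G r x := by
    intro u
    have hu : crSeq H u ∈ crSet G := by rw [h]; exact ⟨u, rfl⟩
    obtain ⟨x, hx⟩ := hu
    exact ⟨x, fun r => (congrFun hx r).symm⟩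
  constructor
  · intro c
    obtain ⟨x, rfl⟩ := c.exists_rep
    obtain ⟨u, hu⟩ := hGH x
    refine ⟨H.connectedComponentMk u, ?_⟩
    change crSet (G.induce (G.connectedComponentMk x).supp) = _
    rw [crSet_induce, crSet_induce]
    exact Set.Subset.antisymm (image_supp_subset G H hu)
      (image_supp_subset H G (fun r => (hu r).symm))
  · intro d
    obtain ⟨u, rfl⟩ := d.exists_rep
    obtain ⟨x, hx⟩ := hHG u
    refine ⟨G.connectedComponentMk x, ?_⟩
    change _ = crSet (H.induce (H.connectedComponentMk u).supp)
    rw [crSet_induce, crSet_induce]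
    exact Set.Subset.antisymm (image_supp_subset G H (fun r => (hx r).symm))
      (image_supp_subset H G hx)
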